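/- With U as in the block decomposition U = [[U_J, α 𝟏_J 𝟏_Kᵗ], [b_K 𝟏_Jᵗ, U_K]] (b_K the last column of U_K, both diagonal blocks nonsingular, α μ̄_J ≠ 1), the total mass of U equals that of U_K: 𝟏ᵗU⁻¹𝟏 = 𝟏ᵗU_K⁻¹𝟏. -/

import Mathlib

open Matrix BigOperators

private lemma vecMulVec_mulVec' {n p : Type*} [Fintype p] (u : n → ℝ) (v : p → ℝ)
    (x : p → ℝ) : (vecMulVec u v) *ᵥ x = (∑ j, v j * x j) • u := by
  ext i
  simp only [mulVec, dotProduct, vecMulVec_apply, Pi.smul_apply, smul_eq_mul]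
  rw [Finset.sum_mul]
  exact Finset.sum_congr rfl fun j _ => by ring

private lemma mulVec_inv_cancel {n : Type*} [Fintype n] [DecidableEq n]
    {A : Matrix n n ℝ} (h : IsUnit A.det) (v : n → ℝ) : A *ᵥ (A⁻¹ *ᵥ v) = v := by
  rw [mulVec_mulVec, Matrix.mul_nonsing_inv _ h, one_mulVec]

private lemma inv_mulVec_cancel {n : Type*} [Fintype n] [DecidableEq n]
    {A : Matrix n n ℝ} (h : IsUnit A.det) (v : n → ℝ) : A⁻¹ *ᵥ (A *ᵥ v) = v := by
  rw [mulVec_mulVec, Matrix.nonsing_inv_mul _ h, one_mulVec]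

theorem block_total_mass_eq (m k : ℕ)
    (UJ : Matrix (Fin m) (Fin m) ℝ) (UK : Matrix (Fin (k + 1)) (Fin (k + 1)) ℝ)
    (α : ℝ) (hJ : IsUnit UJ.det) (hK : IsUnit UK.det)
    (eK : Fin (k + 1) → ℝ) (heK : eK = Pi.single (Fin.last k) 1)
    (hα : α * (∑ i, (UJ⁻¹ *ᵥ (fun _ => (1:ℝ))) i) ≠ 1)
    (U : Matrix (Fin m ⊕ Fin (k + 1)) (Fin m ⊕ Fin (k + 1)) ℝ)
    (hU : U = fromBlocks UJ (α • vecMulVec (fun _ => 1) (fun _ => 1))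
      (vecMulVec (UK *ᵥ eK) (fun _ => 1)) UK) :
    ∑ i, (U⁻¹ *ᵥ (fun _ => (1:ℝ))) i = ∑ i, (UK⁻¹ *ᵥ (fun _ => (1:ℝ))) i := by
  set μJ : ℝ := ∑ i, (UJ⁻¹ *ᵥ (fun _ => (1:ℝ))) i with hμJ
  set μK : ℝ := ∑ i, (UK⁻¹ *ᵥ (fun _ => (1:ℝ))) i with hμK
  have hden : (1 : ℝ) - α * μJ ≠ 0 := fun h => hα (by linarith [sub_eq_zero.mp h])
  have hsumeK : ∑ i, eK i = 1 := by
    rw [heK]; simp [Finset.sum_pi_single]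
  -- U is invertible
  have hUdet : IsUnit U.det := by
    rw [← Matrix.isUnit_iff_isUnit_det]
    rw [← Matrix.mulVec_injective_iff_isUnit]
    intro y z hyz
    have h0 : U *ᵥ (y - z) = 0 := by rw [mulVec_sub, hyz, sub_self]
    suffices hs : y - z = 0 by
      funext i; have := congrFun hs i; simpa [sub_eq_zero] using this
    set w := y - z with hw
    have hw' : w = Sum.elim (w ∘ Sum.inl) (w ∘ Sum.inr) := by
      funext i; cases i <;> rfl
    rw [hU, fromBlocks_mulVec] at h0
    set wJ := w ∘ Sum.inl
    set wK := w ∘ Sum.inr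
    have hJeq' : UJ *ᵥ wJ + (α * ∑ j, wK j) • (fun _ => (1:ℝ)) = 0 := by
      funext i
      have := congrFun h0 (Sum.inl i)
      simpa [smul_mulVec, vecMulVec_mulVec', smul_smul, one_mul] using this
    have hKeq' : (∑ j, wJ j) • (UK *ᵥ eK) + UK *ᵥ wK = 0 := by
      funext i
      have := congrFun h0 (Sum.inr i)
      simpa [vecMulVec_mulVec'] using this
    -- from K equation: wK = -(∑ wJ) • eK
    have hKsolve : wK = -(∑ j, wJ j) • eK := by
      have h1 : UK *ᵥ ((∑ j, wJ j) • eK + wK) = 0 := by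
        rw [mulVec_add, mulVec_smul]; exact hKeq'
      have h2 : (∑ j, wJ j) • eK + wK = 0 := by
        have := congrArg (fun v => UK⁻¹ *ᵥ v) h1
        simpa [inv_mulVec_cancel hK] using this
      funext i
      have := congrFun h2 i
      simp only [Pi.add_apply, Pi.smul_apply, Pi.zero_apply, smul_eq_mul] at this
      simp only [Pi.smul_apply, smul_eq_mul, neg_mul]
      linarith
    have htK : ∑ j, wK j = -(∑ j, wJ j) := by
      rw [hKsolve]
      simp only [Pi.smul_apply, smul_eq_mul, ← Finset.mul_sum, hsumeK, mul_one]
    -- from J equation: wJ = -(α * ∑ wK) • (UJ⁻¹ *ᵥ 1)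
    have hJsolve : wJ = (-(α * ∑ j, wK j)) • (UJ⁻¹ *ᵥ (fun _ => (1:ℝ))) := by
      have h1 : UJ *ᵥ wJ = (-(α * ∑ j, wK j)) • (fun _ => (1:ℝ)) := by
        funext i
        have := congrFun hJeq' i
        simp only [Pi.add_apply, Pi.smul_apply, Pi.zero_apply, smul_eq_mul] at this
        simp only [Pi.smul_apply, smul_eq_mul]
        linarith
      have := congrArg (fun v => UJ⁻¹ *ᵥ v) h1
      simpa [inv_mulVec_cancel hJ, mulVec_neg, mulVec_smul, neg_smul] using this
    have hsJ : ∑ j, wJ j = α * (∑ j, wJ j) * μJ := by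
      conv_lhs => rw [hJsolve]
      simp only [Pi.smul_apply, smul_eq_mul, ← Finset.mul_sum, htK, ← hμJ]
      ring
    have hsJ0 : ∑ j, wJ j = 0 := by
      by_contra h
      apply hden
      have : (∑ j, wJ j) * (1 - α * μJ) = 0 := by linarith [hsJ]
      rcases mul_eq_zero.mp this with h1 | h1
      · exact absurd h1 h
      · exact h1
    have hwK0 : wK = 0 := by rw [hKsolve, hsJ0]; simp
    have hwJ0 : wJ = 0 := by
      rw [hJsolve]
      have : ∑ j, wK j = 0 := by rw [hwK0]; simp
      rw [this]; simp
    rw [hw']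
    funext i
    cases i with
    | inl i => simpa using congrFun hwJ0 i
    | inr i => simpa using congrFun hwK0 i
  -- explicit solution
  set s : ℝ := μJ * (1 - α * μK) / (1 - α * μJ) with hs
  set t : ℝ := μK - s with ht
  have hskey : s * (1 - α * μJ) = μJ * (1 - α * μK) := by
    rw [hs]; exact div_mul_cancel₀ _ hden
  have hs' : s = μJ * (1 - α * t) := by
    rw [ht]; nlinarith [hskey]
  set xJ : Fin m → ℝ := (1 - α * t) • (UJ⁻¹ *ᵥ (fun _ => (1:ℝ))) with hxJ
  set xK : Fin (k+1) → ℝ := (UK⁻¹ *ᵥ (fun _ => (1:ℝ))) - s • eK with hxK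
  have hsumxJ : ∑ j, xJ j = s := by
    rw [hxJ]
    simp only [Pi.smul_apply, smul_eq_mul, ← Finset.mul_sum, ← hμJ]
    rw [hs']; ring
  have hsumxK : ∑ j, xK j = t := by
    rw [hxK]
    simp only [Pi.sub_apply, Pi.smul_apply, smul_eq_mul, Finset.sum_sub_distrib,
      ← Finset.mul_sum, ← hμK, hsumeK, ht]
    ring
  set x : Fin m ⊕ Fin (k+1) → ℝ := Sum.elim xJ xK with hx
  have hsolve : U *ᵥ x = fun _ => (1:ℝ) := by
    rw [hU, hx]
    have hcomp1 : (Sum.elim xJ xK ∘ Sum.inl) = xJ := rfl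
    have hcomp2 : (Sum.elim xJ xK ∘ Sum.inr) = xK := rfl
    rw [fromBlocks_mulVec, hcomp1, hcomp2]
    funext i
    cases i with
    | inl i =>
      simp only [Sum.elim_inl, Pi.add_apply]
      rw [smul_mulVec, vecMulVec_mulVec']
      have h1 : UJ *ᵥ xJ = (1 - α * t) • (fun _ => (1:ℝ)) := by
        rw [hxJ, mulVec_smul, mulVec_inv_cancel hJ]
      have h2 : ∑ j, (1:ℝ) * xK j = t := by simpa using hsumxK
      rw [h1, h2]
      simp only [Pi.smul_apply, smul_eq_mul]
      ring
    | inr i =>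
      simp only [Sum.elim_inr, Pi.add_apply]
      rw [vecMulVec_mulVec']
      have h2 : ∑ j, (1:ℝ) * xJ j = s := by simpa using hsumxJ
      have h3 : UK *ᵥ xK = (fun _ => (1:ℝ)) - s • (UK *ᵥ eK) := by
        rw [hxK, mulVec_sub, mulVec_smul, mulVec_inv_cancel hK]
      rw [h2, h3]
      simp only [Pi.sub_apply, Pi.smul_apply, smul_eq_mul]
      ring
  have hinvx : U⁻¹ *ᵥ (fun _ => (1:ℝ)) = x := by
    rw [← hsolve, inv_mulVec_cancel hUdet]
  rw [hinvx, hx]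
  rw [Fintype.sum_sum_type]
  simp only [Sum.elim_inl, Sum.elim_inr]
  rw [hsumxJ, hsumxK, ht]
  ring
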